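/- Let k be a positive integer, set α = -k, and let β, m be complex numbers such that all quantities below are defined (no division by zero). Then for every complex z, S(α,β,m,z) = m · Σ_{j=0}^{k} (β+1-k+j(z+1))_{k-j} · (m+jz+1)_{j-1} · (-k)_j / j!, where (a)_{-1} is interpreted as 1/(a-1). In particular, z ↦ S(α,β,m,z) is a polynomial in z of degree at most k-1. -/

import Mathlib

/-- The Pochhammer symbol (rising factorial) `(a)_l = a(a+1)⋯(a+l-1)`. -/
noncomputable def poch (a : ℂ) (l : ℕ) : ℂ := ∏ i ∈ Finset.range l, (a + i)

/-- `(a)_{j-1}` for a natural number `j`, where `(a)_{-1}` is interpreted as `1/(a-1)`. -/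
noncomputable def pochPred (a : ℂ) (j : ℕ) : ℂ :=
  if j = 0 then 1 / (a - 1) else poch a (j - 1)

lemma poch_succ (a : ℂ) (n : ℕ) : poch a (n + 1) = poch a n * (a + n) :=
  Finset.prod_range_succ _ _

lemma Gamma_add_nat (s : ℂ) (hs : ∀ N : ℕ, s ≠ -(N : ℂ)) (n : ℕ) :
    Complex.Gamma (s + n) = poch s n * Complex.Gamma s := by
  induction n with
  | zero => simp [poch]
  | succ n ih =>
    have h0 : s + n ≠ 0 := by
      intro h
      exact hs n (by linear_combination h)
    rw [show s + ((n + 1 : ℕ) : ℂ) = (s + n) + 1 by push_cast; ring,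
        Complex.Gamma_add_one _ h0, ih, poch_succ]
    ring

/-- For `α = -k` with `k` a positive integer, the terminating series `S(α,β,m,z)` equals
`m · Σ_{j=0}^{k} (β+1-k+j(z+1))_{k-j} (m+jz+1)_{j-1} (-k)_j / j!`, and in particular
`z ↦ S(α,β,m,z)` is a polynomial in `z` of degree at most `k-1`. -/
theorem S_is_polynomial_in_z (k : ℕ) (hk : 0 < k) (α β m : ℂ) (hα : α = -(k : ℂ))
    (hm : m ≠ 0) :
    (∀ z : ℂ,
      (∀ j : ℕ, j ≤ k → ∀ N : ℕ, β + 1 + (j : ℂ) * z ≠ -(N : ℂ)) →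
      (∀ j : ℕ, j ≤ k → ∀ N : ℕ, m + (j : ℂ) * (z + 1) ≠ -(N : ℂ)) →
      (∀ j : ℕ, j ≤ k → ∀ N : ℕ, α + β + 1 + (j : ℂ) * (z + 1) ≠ -(N : ℂ)) →
      (∀ j : ℕ, j ≤ k → ∀ N : ℕ, m + (j : ℂ) * z + 1 ≠ -(N : ℂ)) →
      m * ∑ j ∈ Finset.range (k + 1),
          (Complex.Gamma (β + 1 + (j : ℂ) * z) * Complex.Gamma (m + (j : ℂ) * (z + 1)) /
            (Complex.Gamma (α + β + 1 + (j : ℂ) * (z + 1)) *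
              Complex.Gamma (m + (j : ℂ) * z + 1))) * poch α j / (Nat.factorial j : ℂ) =
        m * ∑ j ∈ Finset.range (k + 1),
          poch (β + 1 - (k : ℂ) + (j : ℂ) * (z + 1)) (k - j) *
            pochPred (m + (j : ℂ) * z + 1) j * poch (-(k : ℂ)) j / (Nat.factorial j : ℂ)) ∧
    ∃ p : Polynomial ℂ, p.natDegree ≤ k - 1 ∧ ∀ z : ℂ,
      m * ∑ j ∈ Finset.range (k + 1),
          poch (β + 1 - (k : ℂ) + (j : ℂ) * (z + 1)) (k - j) *
            pochPred (m + (j : ℂ) * z + 1) j * poch (-(k : ℂ)) j / (Nat.factorial j : ℂ) =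
        p.eval z := by
  constructor
  · -- Part 1: term-by-term Gamma-ratio identity
    intro z h1 h2 h3 h4
    congr 1
    apply Finset.sum_congr rfl
    intro j hj
    have hjk : j ≤ k := Nat.lt_succ_iff.mp (Finset.mem_range.mp hj)
    set x : ℂ := β + 1 - (k : ℂ) + (j : ℂ) * (z + 1) with hxdef
    have hxeq : α + β + 1 + (j : ℂ) * (z + 1) = x := by rw [hα, hxdef]; ring
    have hx : ∀ N : ℕ, x ≠ -(N : ℂ) := by
      intro N hN
      exact h3 j hjk N (by rw [hxeq]; exact hN)
    have hGx : Complex.Gamma x ≠ 0 := Complex.Gamma_ne_zero hx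
    have key1 : Complex.Gamma (β + 1 + (j : ℂ) * z) = poch x (k - j) * Complex.Gamma x := by
      have h := Gamma_add_nat x hx (k - j)
      rwa [show x + ((k - j : ℕ) : ℂ) = β + 1 + (j : ℂ) * z by
        rw [Nat.cast_sub hjk, hxdef]; ring] at h
    have hfac : ((Nat.factorial j : ℕ) : ℂ) ≠ 0 := by
      exact_mod_cast Nat.factorial_ne_zero j
    rcases Nat.eq_zero_or_pos j with hj0 | hj1
    · -- j = 0
      subst hj0
      have hGm : Complex.Gamma m ≠ 0 := by
        apply Complex.Gamma_ne_zero
        intro N hN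
        exact h2 0 (Nat.zero_le k) N (by push_cast; linear_combination hN)
      have hGm1 : Complex.Gamma (m + 1) = m * Complex.Gamma m := Complex.Gamma_add_one m hm
      rw [hxeq, key1, show m + ((0 : ℕ) : ℂ) * (z + 1) = m by push_cast; ring,
        show m + ((0 : ℕ) : ℂ) * z + 1 = m + 1 by push_cast; ring, hGm1,
        pochPred, if_pos rfl, show m + 1 - 1 = m by ring,
        show poch α 0 = 1 by simp [poch], show poch (-(k : ℂ)) 0 = 1 by simp [poch]]
      field_simp
    · -- j ≥ 1
      have hjne : j ≠ 0 := Nat.pos_iff_ne_zero.mp hj1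
      set y : ℂ := m + (j : ℂ) * z + 1 with hydef
      have hy : ∀ N : ℕ, y ≠ -(N : ℂ) := fun N hN => h4 j hjk N hN
      have hGy : Complex.Gamma y ≠ 0 := Complex.Gamma_ne_zero hy
      have key2 : Complex.Gamma (m + (j : ℂ) * (z + 1)) =
          poch y (j - 1) * Complex.Gamma y := by
        have h := Gamma_add_nat y hy (j - 1)
        rwa [show y + ((j - 1 : ℕ) : ℂ) = m + (j : ℂ) * (z + 1) by
          rw [Nat.cast_sub hj1, hydef]; push_cast; ring] at h
      rw [hxeq, key1, key2, pochPred, if_neg hjne, hα]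
      field_simp
  · -- Part 2: polynomial of degree ≤ k-1
    classical
    set q : ℕ → Polynomial ℂ := fun j =>
      if j = 0 then Polynomial.C (poch (β + 1 - (k : ℂ)) k / m)
      else (∏ i ∈ Finset.range (k - j),
              (Polynomial.C (β + 1 - (k : ℂ) + (i : ℂ) + (j : ℂ)) +
                Polynomial.C (j : ℂ) * Polynomial.X)) *
           (∏ i ∈ Finset.range (j - 1),
              (Polynomial.C (m + 1 + (i : ℂ)) + Polynomial.C (j : ℂ) * Polynomial.X)) *
           Polynomial.C (poch (-(k : ℂ)) j / (Nat.factorial j : ℂ)) with hq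
    refine ⟨Polynomial.C m * ∑ j ∈ Finset.range (k + 1), q j, ?_, ?_⟩
    · -- degree bound
      refine le_trans (Polynomial.natDegree_mul_le) ?_
      rw [Polynomial.natDegree_C, zero_add]
      apply Polynomial.natDegree_sum_le_of_forall_le
      intro j hj
      have hjk : j ≤ k := Nat.lt_succ_iff.mp (Finset.mem_range.mp hj)
      rcases Nat.eq_zero_or_pos j with hj0 | hj1
      · simp [hq, hj0]
      · have hjne : j ≠ 0 := Nat.pos_iff_ne_zero.mp hj1
        rw [hq]
        simp only [if_neg hjne]
        refine le_trans Polynomial.natDegree_mul_le ?_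
        have hb1 : (∏ i ∈ Finset.range (k - j),
            (Polynomial.C (β + 1 - (k : ℂ) + (i : ℂ) + (j : ℂ)) +
              Polynomial.C (j : ℂ) * Polynomial.X)).natDegree ≤ k - j := by
          refine le_trans (Polynomial.natDegree_prod_le _ _) ?_
          calc ∑ i ∈ Finset.range (k - j),
                (Polynomial.C (β + 1 - (k : ℂ) + (i : ℂ) + (j : ℂ)) +
                  Polynomial.C (j : ℂ) * Polynomial.X).natDegree
              ≤ ∑ _i ∈ Finset.range (k - j), 1 := by
                apply Finset.sum_le_sum
                intro i _
                refine le_trans (Polynomial.natDegree_add_le _ _) ?_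
                simp only [Polynomial.natDegree_C, max_le_iff]
                exact ⟨Nat.zero_le 1,
                  le_trans Polynomial.natDegree_mul_le (by simp)⟩
            _ = k - j := by simp
        have hb2 : (∏ i ∈ Finset.range (j - 1),
            (Polynomial.C (m + 1 + (i : ℂ)) + Polynomial.C (j : ℂ) * Polynomial.X)).natDegree
              ≤ j - 1 := by
          refine le_trans (Polynomial.natDegree_prod_le _ _) ?_
          calc ∑ i ∈ Finset.range (j - 1),
                (Polynomial.C (m + 1 + (i : ℂ)) +
                  Polynomial.C (j : ℂ) * Polynomial.X).natDegree
              ≤ ∑ _i ∈ Finset.range (j - 1), 1 := by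
                apply Finset.sum_le_sum
                intro i _
                refine le_trans (Polynomial.natDegree_add_le _ _) ?_
                simp only [Polynomial.natDegree_C, max_le_iff]
                exact ⟨Nat.zero_le 1,
                  le_trans Polynomial.natDegree_mul_le (by simp)⟩
            _ = j - 1 := by simp
        have hAB : ((∏ i ∈ Finset.range (k - j),
              (Polynomial.C (β + 1 - (k : ℂ) + (i : ℂ) + (j : ℂ)) +
                Polynomial.C (j : ℂ) * Polynomial.X)) *
            (∏ i ∈ Finset.range (j - 1),
              (Polynomial.C (m + 1 + (i : ℂ)) +
                Polynomial.C (j : ℂ) * Polynomial.X))).natDegree ≤ (k - j) + (j - 1) :=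
          le_trans Polynomial.natDegree_mul_le (add_le_add hb1 hb2)
        calc _ ≤ (k - j) + (j - 1) + 0 :=
              add_le_add hAB (le_of_eq (Polynomial.natDegree_C _))
          _ ≤ k - 1 := by omega
    · -- evaluation
      intro z
      rw [Polynomial.eval_mul, Polynomial.eval_C, Polynomial.eval_finset_sum]
      congr 1
      apply Finset.sum_congr rfl
      intro j hj
      rcases Nat.eq_zero_or_pos j with hj0 | hj1
      · subst hj0
        simp only [hq, if_pos rfl, Polynomial.eval_C, Nat.cast_zero, Nat.sub_zero,
          Nat.factorial_zero, Nat.cast_one, pochPred, if_pos rfl]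
        rw [show poch (-(k : ℂ)) 0 = 1 by simp [poch]]
        rw [show β + 1 - (k : ℂ) + 0 * (z + 1) = β + 1 - (k : ℂ) by ring,
          show m + (0 : ℂ) * z + 1 - 1 = m by ring]
        field_simp
        rw [if_pos trivial]
        field_simp
      · have hjne : j ≠ 0 := Nat.pos_iff_ne_zero.mp hj1
        rw [hq]
        simp only [if_neg hjne, Polynomial.eval_mul, Polynomial.eval_C, Polynomial.eval_prod,
          Polynomial.eval_add, Polynomial.eval_X]
        have e1 : (∏ i ∈ Finset.range (k - j),
            (β + 1 - (k : ℂ) + (i : ℂ) + (j : ℂ) + (j : ℂ) * z)) =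
            poch (β + 1 - (k : ℂ) + (j : ℂ) * (z + 1)) (k - j) := by
          apply Finset.prod_congr rfl
          intro i _
          ring
        have e2 : (∏ i ∈ Finset.range (j - 1), (m + 1 + (i : ℂ) + (j : ℂ) * z)) =
            pochPred (m + (j : ℂ) * z + 1) j := by
          rw [pochPred, if_neg hjne]
          apply Finset.prod_congr rfl
          intro i _
          ring
        rw [e1, e2]
        ring
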